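/- For the standard words of the Fibonacci slope Φ = [0;2,1,1,…], s_{3k+4} = (∏_{i=0}^{k} (s̃_{3i+2})²) · t_{k+1} for all k ≥ 0, where t_j = 01 if j even, 10 if j odd. Consequently the Fibonacci word c_Φ equals the infinite product ∏_{i=0}^{∞} (s̃_{3i+2})², and its square root is ∏_{i=0}^{∞} s̃_{3i+2}. -/

import Mathlib

/-- The standard (Fibonacci) words of slope `Φ = [0;2,1,1,…]`:
`s₀ = 0`, `s₁ = 01`, `s_k = s_{k−1} s_{k−2}`. -/
def fw : ℕ → List Bool
  | 0 => [false]
  | 1 => [false, true]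
  | k + 2 => fw (k + 1) ++ fw k

/-- `t_k = 01` if `k` is even, `t_k = 10` if `k` is odd. -/
def tk (k : ℕ) : List Bool := if k % 2 = 0 then [false, true] else [true, false]


/-- `w` is a prefix of the infinite word `s`. -/
def IsPref (w : List Bool) (s : ℕ → Bool) : Prop :=
  ∀ i, i < w.length → w.getD i false = s i

/-- The infinite Fibonacci word `c_Φ = lim s_k`. -/
def cFib (n : ℕ) : Bool := (fw (n + 1)).getD n false

/-- `s_{3k+4} = (∏_{i=0}^{k} (s̃_{3i+2})²) · t_{k+1}` for all `k ≥ 0`;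
consequently the Fibonacci word `c_Φ` equals the infinite product
`∏_{i=0}^{∞} (s̃_{3i+2})²`, and its square root (obtained from any factorization of
`c_Φ` into minimal squares `X₁²X₂²⋯` as `X₁X₂⋯`) is `∏_{i=0}^{∞} s̃_{3i+2}`. -/
lemma tk_add_two (k : ℕ) : tk (k + 2) = tk k := by
  simp [tk, Nat.add_mod_right]
lemma tk_parity {a b : ℕ} (h : a % 2 = b % 2) : tk a = tk b := by
  simp only [tk, h]
def qq : ℕ → List Bool
  | 0 => [false]
  | 1 => [false, true, false]
  | k + 2 => fw (k + 3) ++ qq k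
lemma qA : ∀ k, fw (k + 2) = qq k ++ tk (k + 1)
  | 0 => by decide
  | 1 => by decide
  | (k + 2) => by
      show fw (k + 3) ++ fw (k + 2) = (fw (k + 3) ++ qq k) ++ tk (k + 3)
      rw [qA k, tk_add_two, List.append_assoc]
lemma qD : ∀ k, qq k ++ (tk (k + 1) ++ qq (k + 1)) = qq (k + 1) ++ (tk k ++ qq k)
  | 0 => by decide
  | 1 => by decide
  | (k + 2) => by
      have hf3 : fw (k + 3) = qq (k + 1) ++ tk k := by rw [qA (k + 1), tk_add_two]
      have hf4 : fw (k + 4) = (qq (k + 1) ++ tk k) ++ (qq k ++ tk (k + 1)) := by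
        show fw (k + 3) ++ fw (k + 2) = _
        rw [hf3, qA k]
      show (fw (k + 3) ++ qq k) ++ (tk (k + 3) ++ (fw (k + 4) ++ qq (k + 1)))
          = (fw (k + 4) ++ qq (k + 1)) ++ (tk (k + 2) ++ (fw (k + 3) ++ qq k))
      rw [tk_add_two, tk_add_two, hf3, hf4]
      simp only [List.append_assoc]
      rw [qD k]
lemma qB : ∀ k, (fw (k + 2)).reverse = tk k ++ qq k
  | 0 => by decide
  | 1 => by decide
  | (k + 2) => by
      have hf3 : fw (k + 3) = qq (k + 1) ++ tk k := by rw [qA (k + 1), tk_add_two]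
      show (fw (k + 3) ++ fw (k + 2)).reverse = tk (k + 2) ++ (fw (k + 3) ++ qq k)
      rw [List.reverse_append, qB k, qB (k + 1), tk_add_two, hf3]
      simp only [List.append_assoc]
      rw [qD k]
lemma qSW : ∀ k, ∃ p, fw (k + 1) ++ fw k = p ++ tk (k + 1) ∧ fw k ++ fw (k + 1) = p ++ tk k
  | 0 => ⟨[false], by decide, by decide⟩
  | (k + 1) => by
      obtain ⟨p, h1, h2⟩ := qSW k
      refine ⟨fw (k + 1) ++ p, ?_, ?_⟩
      · show (fw (k + 1) ++ fw k) ++ fw (k + 1) = _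
        rw [List.append_assoc, h2, tk_add_two, List.append_assoc]
      · show fw (k + 1) ++ (fw (k + 1) ++ fw k) = _
        rw [h1, List.append_assoc]
lemma main1 : ∀ k : ℕ, fw (3 * k + 4) =
    List.flatten ((List.range (k + 1)).map fun i =>
      (fw (3 * i + 2)).reverse ++ (fw (3 * i + 2)).reverse) ++ tk (k + 1) := by
  intro k
  induction k with
  | zero => decide
  | succ k ih =>
    have h5 : fw (3 * k + 5) = fw (3 * k + 4) ++ fw (3 * k + 3) := rfl
    have hR : (fw (3 * k + 5)).reverse = tk (k + 1) ++ qq (3 * k + 3) := by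
      rw [qB (3 * k + 3)]; congr 1; exact tk_parity (by omega)
    have hQ : fw (3 * k + 5) = qq (3 * k + 3) ++ tk k := by
      rw [qA (3 * k + 3)]; congr 1; exact tk_parity (by omega)
    obtain ⟨p, h1, h2⟩ := qSW (3 * k + 3)
    have hp : p = qq (3 * k + 3) := by
      have hx : p ++ tk (3 * k + 3 + 1) = qq (3 * k + 3) ++ tk k := by
        rw [← h1, ← h5, hQ]
      rw [tk_parity (a := 3 * k + 3 + 1) (b := k) (by omega)] at hx
      exact List.append_cancel_right hx
    have h34 : fw (3 * k + 3) ++ fw (3 * k + 4) = qq (3 * k + 3) ++ tk (k + 1) := by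
      rw [h2, hp]; congr 1; exact tk_parity (by omega)
    have h45 : fw (3 * k + 4) ++ fw (3 * k + 3) = qq (3 * k + 3) ++ tk k := by
      rw [← h5, hQ]
    have e1 : 3 * (k + 1) + 4 = 3 * k + 7 := by omega
    have e2 : 3 * (k + 1) + 2 = 3 * k + 5 := by omega
    have expand : fw (3 * (k + 1) + 4) =
        fw (3 * k + 4) ++ ((fw (3 * k + 3) ++ fw (3 * k + 4)) ++ (fw (3 * k + 4) ++ fw (3 * k + 3))) := by
      rw [e1]
      show (fw (3 * k + 5) ++ fw (3 * k + 4)) ++ fw (3 * k + 5) = _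
      rw [h5]
      simp only [List.append_assoc]
    have hJ : (List.map (fun i => (fw (3 * i + 2)).reverse ++ (fw (3 * i + 2)).reverse)
        (List.range (k + 1 + 1))).flatten =
        (List.map (fun i => (fw (3 * i + 2)).reverse ++ (fw (3 * i + 2)).reverse)
          (List.range (k + 1))).flatten ++
        ((fw (3 * k + 5)).reverse ++ (fw (3 * k + 5)).reverse) := by
      conv_lhs => rw [List.range_succ]
      simp [e2]
    rw [expand, h34, h45, ih, hJ, hR, tk_add_two]
    simp only [List.append_assoc]
lemma length_fw : ∀ k, k + 1 ≤ (fw k).length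
  | 0 => by decide
  | 1 => by decide
  | (k + 2) => by
    have h1 := length_fw (k + 1)
    have h0 := length_fw k
    show k + 3 ≤ (fw (k + 1) ++ fw k).length
    rw [List.length_append]; omega
lemma fw_prefix_succ : ∀ k, fw k <+: fw (k + 1)
  | 0 => by decide
  | (k + 1) => ⟨fw k, rfl⟩
lemma fw_mono {m n : ℕ} (h : m ≤ n) : fw m <+: fw n := by
  induction n with
  | zero => cases Nat.le_zero.mp h; exact List.prefix_refl _
  | succ n ih =>
    rcases Nat.lt_or_ge m (n + 1) with h' | h'
    · exact (ih (by omega)).trans (fw_prefix_succ n)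
    · have : m = n + 1 := by omega
      subst this; exact List.prefix_refl _
lemma getD_of_prefix {u v : List Bool} (h : u <+: v) {i : ℕ} (hi : i < u.length) :
    u.getD i false = v.getD i false := by
  obtain ⟨t, rfl⟩ := h
  exact (List.getD_append _ _ _ _ hi).symm
lemma ispref_of_prefix_fw {w : List Bool} {m : ℕ} (h : w <+: fw m) : IsPref w cFib := by
  intro i hi
  have h1 : w <+: fw (max m (i + 1)) := h.trans (fw_mono (le_max_left _ _))
  have h2 : fw (i + 1) <+: fw (max m (i + 1)) := fw_mono (le_max_right _ _)
  have hl : i < (fw (i + 1)).length := by have := length_fw (i + 1); omega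
  rw [getD_of_prefix h1 hi, cFib, getD_of_prefix h2 hl]
lemma main2 : ∀ k : ℕ, IsPref
    (List.flatten ((List.range k).map fun i =>
      (fw (3 * i + 2)).reverse ++ (fw (3 * i + 2)).reverse)) cFib := by
  intro k
  cases k with
  | zero => intro i hi; simp at hi
  | succ k =>
    apply ispref_of_prefix_fw (m := 3 * k + 4)
    rw [main1 k]
    exact ⟨tk (k + 1), rfl⟩
def phm (l : List Bool) : List Bool := l.flatMap fun b => if b then [false] else [false, true]
def gmm (l : List Bool) : List Bool := l.flatMap fun b => if b then [false] else [true, false]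
lemma phm_append (u v : List Bool) : phm (u ++ v) = phm u ++ phm v := by
  simp [phm]
lemma gmm_append (u v : List Bool) : gmm (u ++ v) = gmm u ++ gmm v := by
  simp [gmm]
lemma fw_phm : ∀ k, phm (fw k) = fw (k + 1)
  | 0 => by decide
  | 1 => by decide
  | (k + 2) => by
    show phm (fw (k + 1) ++ fw k) = fw (k + 2) ++ fw (k + 1)
    rw [phm_append, fw_phm (k + 1), fw_phm k]
lemma rev_phm : ∀ l : List Bool, (phm l).reverse = gmm l.reverse := by
  intro l
  induction l with
  | nil => rfl
  | cons x l ih =>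
    rw [List.reverse_cons, show phm (x :: l) = phm [x] ++ phm l from by simp [phm],
      List.reverse_append, gmm_append, ih]
    congr 1
    cases x <;> rfl
lemma R_rec (i : ℕ) : (fw (3 * (i + 1) + 2)).reverse = gmm (gmm (gmm ((fw (3 * i + 2)).reverse))) := by
  have e : 3 * (i + 1) + 2 = 3 * i + 2 + 1 + 1 + 1 := by omega
  rw [e, ← fw_phm, ← fw_phm, ← fw_phm, rev_phm, rev_phm, rev_phm]
def rtt : ℕ → List Bool
  | 0 => [false]
  | 1 => [false, true]
  | 2 => [true, false]
  | 3 => [false, true, false]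
  | 4 => [true, false, false]
  | _ => [true, false, false, true, false]
def eta : ℕ → List ℕ
  | 0 => [5]
  | 1 => [4, 2, 3]
  | 2 => [1, 0, 5]
  | 3 => [4, 2, 1, 0, 5]
  | 4 => [1, 0, 2, 3, 5]
  | _ => [1, 0, 2, 3, 4, 2, 1, 0, 5]
def BB : ℕ → List ℕ
  | 0 => [3]
  | i + 1 => ((BB i).map eta).flatten
def LL (n : ℕ) : List ℕ := ((List.range n).map BB).flatten
def rt (l : List ℕ) : List Bool := (l.map rtt).flatten
def sqq (l : List ℕ) : List Bool := (l.map fun x => rtt x ++ rtt x).flatten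
lemma fact1 : ∀ x < 6, sqq (eta x) = rt (eta x) ++ rt (eta x) := by decide
lemma fact2 : ∀ x < 6, rt (eta x) = gmm (gmm (gmm (rtt x))) := by decide
lemma fact3 : ∀ x < 6, ∀ y ∈ eta x, y < 6 := by decide
lemma fact4 : ∀ x < 6, rtt x ≠ [] := by decide
lemma rt_append (u v : List ℕ) : rt (u ++ v) = rt u ++ rt v := by simp [rt]
lemma sq_append (u v : List ℕ) : sqq (u ++ v) = sqq u ++ sqq v := by simp [sqq]
def good (l : List ℕ) : Prop := ∀ x ∈ l, x < 6
lemma rt_eta (l : List ℕ) (hl : good l) : rt ((l.map eta).flatten) = gmm (gmm (gmm (rt l))) := by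
  induction l with
  | nil => rfl
  | cons x l ih =>
    have hx : x < 6 := hl x (by simp)
    have hl' : good l := fun y hy => hl y (by simp [hy])
    show rt (eta x ++ (l.map eta).flatten) = gmm (gmm (gmm (rt ([x] ++ l))))
    rw [rt_append, rt_append, ih hl', fact2 x hx, gmm_append, gmm_append, gmm_append]
    congr 1
    simp [rt]
lemma sq_eta (l : List ℕ) (hl : good l) : sqq ((l.map eta).flatten) = gmm (gmm (gmm (sqq l))) := by
  induction l with
  | nil => rfl
  | cons x l ih =>
    have hx : x < 6 := hl x (by simp)
    have hl' : good l := fun y hy => hl y (by simp [hy])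
    show sqq (eta x ++ (l.map eta).flatten) = gmm (gmm (gmm (sqq ([x] ++ l))))
    rw [sq_append, sq_append, ih hl', fact1 x hx, fact2 x hx]
    rw [gmm_append, gmm_append, gmm_append]
    congr 1
    show gmm (gmm (gmm (rtt x))) ++ gmm (gmm (gmm (rtt x))) = gmm (gmm (gmm (sqq [x])))
    have : sqq [x] = rtt x ++ rtt x := by simp [sqq]
    rw [this, gmm_append, gmm_append, gmm_append]
lemma BB_good : ∀ i, good (BB i)
  | 0 => by intro x hx; simp only [BB, List.mem_singleton] at hx; omega
  | (i + 1) => by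
    intro y hy
    simp only [BB, List.mem_flatten, List.mem_map] at hy
    obtain ⟨l, ⟨x, hx, rfl⟩, hyl⟩ := hy
    exact fact3 x (BB_good i x hx) y hyl
lemma BB_rt_sq : ∀ i, rt (BB i) = (fw (3 * i + 2)).reverse ∧
    sqq (BB i) = (fw (3 * i + 2)).reverse ++ (fw (3 * i + 2)).reverse
  | 0 => by constructor <;> decide
  | (i + 1) => by
    obtain ⟨h1, h2⟩ := BB_rt_sq i
    constructor
    · show rt (((BB i).map eta).flatten) = _
      rw [rt_eta _ (BB_good i), h1, R_rec i]
    · show sqq (((BB i).map eta).flatten) = _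
      rw [sq_eta _ (BB_good i), h2, R_rec i, gmm_append, gmm_append, gmm_append]
lemma LL_succ (n : ℕ) : LL (n + 1) = LL n ++ BB n := by
  simp [LL, List.range_succ]
lemma LL_prefix {m n : ℕ} (h : m ≤ n) : LL m <+: LL n := by
  induction n with
  | zero => cases Nat.le_zero.mp h; exact List.prefix_refl _
  | succ n ih =>
    rcases Nat.lt_or_ge m (n + 1) with h' | h'
    · exact ((ih (by omega)).trans ⟨BB n, (LL_succ n).symm⟩)
    · have : m = n + 1 := by omega
      subst this; exact List.prefix_refl _
lemma eta_ne : ∀ x, eta x ≠ []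
  | 0 => by simp [eta]
  | 1 => by simp [eta]
  | 2 => by simp [eta]
  | 3 => by simp [eta]
  | 4 => by simp [eta]
  | (n + 5) => by simp [eta]
lemma BB_len : ∀ i, 1 ≤ (BB i).length
  | 0 => by simp [BB]
  | (i + 1) => by
    have h := BB_len i
    rw [show BB (i + 1) = ((BB i).map eta).flatten from rfl]
    rcases hB : BB i with _ | ⟨x, l⟩
    · rw [hB] at h; simp at h
    · have h1 : 1 ≤ (eta x).length := by
        rcases hE : eta x with _ | _
        · exact absurd hE (eta_ne x)
        · simp
      simp only [List.map_cons, List.flatten_cons, List.length_append]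
      omega
lemma LL_len : ∀ n, n ≤ (LL n).length
  | 0 => by simp [LL]
  | (n + 1) => by
    rw [LL_succ, List.length_append]
    have := LL_len n
    have := BB_len n
    omega
lemma LL_good (n : ℕ) : good (LL n) := by
  intro x hx
  simp only [LL, List.mem_flatten, List.mem_map] at hx
  obtain ⟨l, ⟨i, _, rfl⟩, hxl⟩ := hx
  exact BB_good i x hxl
lemma sqq_LL : ∀ n, sqq (LL n) = List.flatten ((List.range n).map fun i =>
    (fw (3 * i + 2)).reverse ++ (fw (3 * i + 2)).reverse)
  | 0 => rfl
  | (n + 1) => by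
    rw [LL_succ, sq_append, sqq_LL n, (BB_rt_sq n).2]
    conv_rhs => rw [List.range_succ]
    simp
lemma rt_LL : ∀ n, rt (LL n) = List.flatten ((List.range n).map fun i =>
    (fw (3 * i + 2)).reverse)
  | 0 => rfl
  | (n + 1) => by
    rw [LL_succ, rt_append, rt_LL n, (BB_rt_sq n).1]
    conv_rhs => rw [List.range_succ]
    simp
lemma getD_of_prefix' {α : Type*} {u v : List α} (d : α) (h : u <+: v) {i : ℕ}
    (hi : i < u.length) : u.getD i d = v.getD i d := by
  obtain ⟨t, rfl⟩ := h
  exact (List.getD_append _ _ _ _ hi).symm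
def Zc (m : ℕ) : List Bool := rtt ((LL (m + 1)).getD m 0)
lemma getD_LL_stable {m n : ℕ} (hm : m < (LL n).length) :
    (LL n).getD m 0 = (LL (m + 1)).getD m 0 := by
  rcases le_total n (m + 1) with h | h
  · exact getD_of_prefix' 0 (LL_prefix h) hm
  · exact (getD_of_prefix' 0 (LL_prefix h) (by have := LL_len (m + 1); omega)).symm
lemma take_getD {α : Type*} (l : List α) (m : ℕ) (d : α) (h : m < l.length) :
    l.take (m + 1) = l.take m ++ [l.getD m d] := by
  rw [List.getD_eq_getElem l d h, List.take_concat_get' l m h]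
lemma join_range_succ {α : Type*} (f : ℕ → List α) (m : ℕ) :
    ((List.range (m + 1)).map f).flatten = ((List.range m).map f).flatten ++ f m := by
  rw [List.range_succ]; simp
lemma ZJ : ∀ m n, m ≤ (LL n).length →
    ((List.range m).map Zc).flatten = rt ((LL n).take m) := by
  intro m
  induction m with
  | zero => intro n _; simp [rt]
  | succ m ih =>
    intro n h
    have hm : m < (LL n).length := by omega
    rw [join_range_succ, take_getD (LL n) m 0 hm, rt_append, ih n (by omega)]
    congr 1
    show Zc m = rt [(LL n).getD m 0]
    rw [getD_LL_stable hm]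
    simp [rt, Zc]
lemma ZJsq : ∀ m n, m ≤ (LL n).length →
    ((List.range m).map fun j => Zc j ++ Zc j).flatten = sqq ((LL n).take m) := by
  intro m
  induction m with
  | zero => intro n _; simp [sqq]
  | succ m ih =>
    intro n h
    have hm : m < (LL n).length := by omega
    rw [join_range_succ, take_getD (LL n) m 0 hm, sq_append, ih n (by omega)]
    congr 1
    show Zc m ++ Zc m = sqq [(LL n).getD m 0]
    rw [getD_LL_stable hm]
    simp [sqq, Zc]
lemma ispref_mono {w w' : List Bool} (h : w <+: w') (h' : IsPref w' cFib) : IsPref w cFib := by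
  intro i hi
  rw [getD_of_prefix' false h hi]
  exact h' i (lt_of_lt_of_le hi h.length_le)
lemma ZsqPref (m : ℕ) : IsPref (((List.range m).map fun j => Zc j ++ Zc j).flatten) cFib := by
  rw [ZJsq m m (LL_len m)]
  apply ispref_mono _ (main2 m)
  rw [← sqq_LL m]
  have : LL m = (LL m).take m ++ (LL m).drop m := (List.take_append_drop m (LL m)).symm
  conv_rhs => rw [this]
  rw [sq_append]
  exact ⟨_, rfl⟩
def MinWord (w : List Bool) : Prop := ∀ v : List Bool, v ≠ [] → v ++ v <+: w ++ w → v = w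
lemma min_check : ∀ x < 6, ∀ k < (rtt x).length, 0 < k →
    ¬ ((rtt x).take k ++ (rtt x).take k <+: rtt x ++ rtt x) := by decide
lemma minWord_rtt {x : ℕ} (hx : x < 6) : MinWord (rtt x) := by
  intro v hv hpre
  have hlen : v.length ≤ (rtt x).length := by
    have := hpre.length_le
    simp only [List.length_append] at this
    omega
  have hvw : v <+: rtt x := by
    exact List.prefix_of_prefix_length_le ((List.prefix_append v v).trans hpre)
      (List.prefix_append _ _) hlen
  rcases Nat.lt_or_ge v.length (rtt x).length with hlt | hge
  · exfalso
    have hvt : v = (rtt x).take v.length := List.prefix_iff_eq_take.mp hvw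
    have hpos : 0 < v.length := List.length_pos_iff.mpr hv
    exact min_check x hx v.length hlt hpos (hvt ▸ hpre)
  · exact hvw.eq_of_length (by omega)
lemma pref_cmp {u v w : List Bool} (hv : IsPref (u ++ v) cFib) (hw : IsPref (u ++ w) cFib)
    (h : v.length ≤ w.length) : v <+: w := by
  have hvt : v = w.take v.length := by
    apply List.ext_getElem
    · simp [h, Nat.min_eq_left]
    · intro i h1 h2
      have hiv : i < v.length := h1
      have hiw : i < w.length := by omega
      have e1 : v[i] = (u ++ v).getD (u.length + i) false := by
        rw [List.getD_append_right _ _ _ _ (by omega)]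
        simp only [Nat.add_sub_cancel_left]
        rw [List.getD_eq_getElem _ _ hiv]
      have e2 : w[i] = (u ++ w).getD (u.length + i) false := by
        rw [List.getD_append_right _ _ _ _ (by omega)]
        simp only [Nat.add_sub_cancel_left]
        rw [List.getD_eq_getElem _ _ hiw]
      have c1 := hv (u.length + i) (by simp only [List.length_append]; omega)
      have c2 := hw (u.length + i) (by simp only [List.length_append]; omega)
      rw [List.getElem_take]
      rw [← e1] at c1
      rw [← e2] at c2
      rw [← c2] at c1
      exact c1
  rw [hvt]
  exact List.take_prefix _ _
lemma X_eq_Zc (X : ℕ → List Bool) (h1 : ∀ n, X n ≠ [])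
    (h2 : ∀ n, ∀ v : List Bool, v ≠ [] → (v ++ v) <+: (X n ++ X n) → v = X n)
    (h3 : ∀ n, IsPref (List.flatten ((List.range n).map fun i => X i ++ X i)) cFib) :
    ∀ m, X m = Zc m := by
  intro m
  induction m using Nat.strong_induction_on with
  | _ m ih =>
    have hXu : ((List.range m).map fun j => X j ++ X j).flatten
        = ((List.range m).map fun j => Zc j ++ Zc j).flatten := by
      congr 1
      apply List.map_congr_left
      intro j hj
      rw [ih j (List.mem_range.mp hj)]
    have hx : IsPref ((((List.range m).map fun j => Zc j ++ Zc j).flatten) ++ (X m ++ X m)) cFib := by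
      have := h3 (m + 1)
      rw [join_range_succ, hXu] at this
      exact this
    have hz : IsPref ((((List.range m).map fun j => Zc j ++ Zc j).flatten) ++ (Zc m ++ Zc m)) cFib := by
      have := ZsqPref (m + 1)
      rw [join_range_succ] at this
      exact this
    have hlet : (LL (m + 1)).getD m 0 < 6 := by
      have hm : m < (LL (m + 1)).length := by have := LL_len (m + 1); omega
      rw [List.getD_eq_getElem _ _ hm]
      exact LL_good (m + 1) _ (List.getElem_mem hm)
    have hZm : MinWord (Zc m) := minWord_rtt hlet
    have hZne : Zc m ≠ [] := fact4 _ hlet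
    rcases le_total (X m ++ X m).length (Zc m ++ Zc m).length with hc | hc
    · exact hZm (X m) (h1 m) (pref_cmp hx hz hc)
    · exact (h2 m (Zc m) hZne (pref_cmp hz hx hc)).symm

theorem fibonacci_square_root :
    (∀ k : ℕ, fw (3 * k + 4) =
      List.flatten ((List.range (k + 1)).map fun i =>
        (fw (3 * i + 2)).reverse ++ (fw (3 * i + 2)).reverse) ++ tk (k + 1)) ∧
    (∀ k : ℕ, IsPref
      (List.flatten ((List.range k).map fun i =>
        (fw (3 * i + 2)).reverse ++ (fw (3 * i + 2)).reverse)) cFib) ∧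
    (∀ X : ℕ → List Bool, (∀ n, X n ≠ []) →
      (∀ n, ∀ v : List Bool, v ≠ [] → (v ++ v) <+: (X n ++ X n) → v = X n) →
      (∀ n, IsPref (List.flatten ((List.range n).map fun i => X i ++ X i)) cFib) →
      (∀ m : ℕ, ∃ n : ℕ, List.flatten ((List.range m).map X) <+:
          List.flatten ((List.range n).map fun i => (fw (3 * i + 2)).reverse)) ∧
      (∀ n : ℕ, ∃ m : ℕ,
          List.flatten ((List.range n).map fun i => (fw (3 * i + 2)).reverse) <+:
            List.flatten ((List.range m).map X))) := by
  refine ⟨main1, main2, ?_⟩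
  intro X h1 h2 h3
  have hXZ := X_eq_Zc X h1 h2 h3
  constructor
  · intro m
    refine ⟨m + 1, ?_⟩
    have hmap : (List.range m).map X = (List.range m).map Zc :=
      List.map_congr_left fun j _ => hXZ j
    rw [hmap, ← rt_LL (m + 1), ZJ m (m + 1) (by have := LL_len (m + 1); omega)]
    conv_rhs => rw [show LL (m + 1) = (LL (m + 1)).take m ++ (LL (m + 1)).drop m from
      (List.take_append_drop _ _).symm]
    rw [rt_append]
    exact ⟨_, rfl⟩
  · intro n
    refine ⟨(LL n).length, ?_⟩
    have hmap : (List.range ((LL n).length)).map X = (List.range ((LL n).length)).map Zc :=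
      List.map_congr_left fun j _ => hXZ j
    rw [hmap, ZJ _ n le_rfl, List.take_length, rt_LL n]
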